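/- (Error bound with rotational alignment.) Let N be a positive integer, and for each i = 1,…,N let B_i ∈ ℝ^{d×r}, A_i ∈ ℝ^{r×d}, and let R_i ∈ ℝ^{r×r} be orthogonal. Define the aligned factors B̃_i = B_i R_i and Ã_i = R_iᵀ A_i, and the aligned aggregation error E_aligned = ((1/N)∑_i B̃_i)((1/N)∑_i Ã_i) − (1/N)∑_i B̃_i Ã_i. Fix references B_ref ∈ ℝ^{d×r}, A_ref ∈ ℝ^{r×d} and constants τ, κ, η, G_B ≥ 0, c₀ > 0, λ ∈ (0,1], δ_A > 0, and assume for every i: (i) ‖B_i‖_F ≤ √τ; (ii) relative alignment gain: (1/N)∑_i ‖Ã_i − A_ref‖_F² ≤ (1 − c₀λ)·(1/N)∑_i ‖A_i − A_ref‖_F²; (iii) ‖R_i − I‖_F ≤ 2κλ‖A_i − A_ref‖_F; (iv) ‖B_i − B_ref‖_F ≤ η G_B; (v) ‖A_i − A_ref‖_F ≥ δ_A. Then ‖E_aligned‖_F ≤ (1/N)∑_{i=1}^N ( ‖B̃_i − B_ref‖_F² + ‖Ã_i − A_ref‖_F² ) ≤ (1/N)∑_{i=1}^N ( ‖B_i −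 B_ref‖_F² + ‖A_i − A_ref‖_F² − Γ(λ)·‖A_i − A_ref‖_F² ), where Γ(λ) = (c₀ − 4√τ κ η G_B / δ_A)·λ − 4κ²λ²τ. -/

import Mathlib

open scoped BigOperators
open Matrix

/-- Frobenius norm of a real matrix. -/
noncomputable def frob {m n : Type*} [Fintype m] [Fintype n] (M : Matrix m n ℝ) : ℝ :=
  Real.sqrt (∑ i, ∑ j, (M i j) ^ 2)

attribute [local instance] Matrix.frobeniusSeminormedAddCommGroup Matrix.frobeniusNormedSpace

private lemma half_am (x y : ℝ) : x * y ≤ (x ^ 2 + y ^ 2) / 2 := by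
  nlinarith [sq_nonneg (x - y)]

lemma frob_eq_norm {m n : Type*} [Fintype m] [Fintype n] (M : Matrix m n ℝ) : frob M = ‖M‖ := by
  rw [frob, Matrix.frobenius_norm_def, Real.sqrt_eq_rpow]
  congr 1
  simp [Real.rpow_two, Real.norm_eq_abs, sq_abs]

set_option maxHeartbeats 1000000 in
/-- Error bound with rotational alignment: with aligned factors
`B̃ᵢ = BᵢRᵢ`, `Ãᵢ = RᵢᵀAᵢ` and aligned aggregation error
`E_aligned = ((1/N)∑ B̃ᵢ)((1/N)∑ Ãᵢ) − (1/N)∑ B̃ᵢÃᵢ`, under the alignment-gain,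
rotation-dispersion, gradient-bound and drift assumptions,
`‖E_aligned‖_F ≤ (1/N)∑ (‖B̃ᵢ−B_ref‖² + ‖Ãᵢ−A_ref‖²)
             ≤ (1/N)∑ (‖Bᵢ−B_ref‖² + ‖Aᵢ−A_ref‖² − Γ(λ)‖Aᵢ−A_ref‖²)`,
where `Γ(λ) = (c₀ − 4√τκηG_B/δ_A)λ − 4κ²λ²τ`. -/
theorem error_bound_with_rotational_alignment (N d r : ℕ) (hN : 0 < N)
    (B : Fin N → Matrix (Fin d) (Fin r) ℝ) (A : Fin N → Matrix (Fin r) (Fin d) ℝ)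
    (R : Fin N → Matrix (Fin r) (Fin r) ℝ) (hR : ∀ i, (R i)ᵀ * R i = 1)
    (Bref : Matrix (Fin d) (Fin r) ℝ) (Aref : Matrix (Fin r) (Fin d) ℝ)
    (τ κ η GB c₀ lam δA : ℝ)
    (hτ : 0 ≤ τ) (hκ : 0 ≤ κ) (hη : 0 ≤ η) (hGB : 0 ≤ GB)
    (hc₀ : 0 < c₀) (hlam0 : 0 < lam) (hlam1 : lam ≤ 1) (hδA : 0 < δA)
    (hB : ∀ i, frob (B i) ≤ Real.sqrt τ)
    (hgain : (N : ℝ)⁻¹ * ∑ i, frob ((R i)ᵀ * A i - Aref) ^ 2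
      ≤ (1 - c₀ * lam) * ((N : ℝ)⁻¹ * ∑ i, frob (A i - Aref) ^ 2))
    (hRI : ∀ i, frob (R i - 1) ≤ 2 * κ * lam * frob (A i - Aref))
    (hBref : ∀ i, frob (B i - Bref) ≤ η * GB)
    (hA : ∀ i, δA ≤ frob (A i - Aref)) :
    frob (((N : ℝ)⁻¹ • ∑ i, B i * R i) * ((N : ℝ)⁻¹ • ∑ i, (R i)ᵀ * A i)
          - (N : ℝ)⁻¹ • ∑ i, (B i * R i) * ((R i)ᵀ * A i))
        ≤ (N : ℝ)⁻¹ * ∑ i, (frob (B i * R i - Bref) ^ 2 + frob ((R i)ᵀ * A i - Aref) ^ 2)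
      ∧ (N : ℝ)⁻¹ * ∑ i, (frob (B i * R i - Bref) ^ 2 + frob ((R i)ᵀ * A i - Aref) ^ 2)
        ≤ (N : ℝ)⁻¹ * ∑ i, (frob (B i - Bref) ^ 2 + frob (A i - Aref) ^ 2
            - ((c₀ - 4 * Real.sqrt τ * κ * η * GB / δA) * lam - 4 * κ ^ 2 * lam ^ 2 * τ)
              * frob (A i - Aref) ^ 2) := by
  have hNR : (0:ℝ) < (N:ℝ) := by exact_mod_cast hN
  have hNne : ((N:ℝ)) ≠ 0 := ne_of_gt hNR
  have hc0 : (0:ℝ) < (N:ℝ)⁻¹ := inv_pos.mpr hNR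
  have hcN : (N:ℝ)⁻¹ * (N:ℝ) = 1 := inv_mul_cancel₀ hNne
  simp only [frob_eq_norm] at hB hgain hRI hBref hA ⊢
  set c : ℝ := (N:ℝ)⁻¹ with hcdef
  constructor
  · -- first inequality
    have hid :
        (c • ∑ i, B i * R i) * (c • ∑ i, (R i)ᵀ * A i)
            - c • ∑ i, (B i * R i) * ((R i)ᵀ * A i)
          = (c • ∑ i, (B i * R i - Bref)) * (c • ∑ i, ((R i)ᵀ * A i - Aref))
            - c • ∑ i, (B i * R i - Bref) * ((R i)ᵀ * A i - Aref) := by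
      have e1 : ∑ i : Fin N, (B i * R i - Bref) = (∑ i, B i * R i) - (N:ℝ) • Bref := by
        rw [Finset.sum_sub_distrib, Finset.sum_const, Finset.card_univ, Fintype.card_fin,
          Nat.cast_smul_eq_nsmul ℝ]
      have e2 : ∑ i : Fin N, ((R i)ᵀ * A i - Aref) = (∑ i, (R i)ᵀ * A i) - (N:ℝ) • Aref := by
        rw [Finset.sum_sub_distrib, Finset.sum_const, Finset.card_univ, Fintype.card_fin,
          Nat.cast_smul_eq_nsmul ℝ]
      have e3 : ∑ i : Fin N, (B i * R i - Bref) * ((R i)ᵀ * A i - Aref)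
          = (∑ i, (B i * R i) * ((R i)ᵀ * A i)) - (∑ i, B i * R i) * Aref
            - Bref * (∑ i, (R i)ᵀ * A i) + (N:ℝ) • (Bref * Aref) := by
        simp_rw [Matrix.sub_mul, Matrix.mul_sub]
        rw [Finset.sum_sub_distrib, Finset.sum_sub_distrib, Finset.sum_sub_distrib,
          ← Matrix.sum_mul, ← Matrix.mul_sum, Finset.sum_const, Finset.card_univ,
          Fintype.card_fin, Nat.cast_smul_eq_nsmul ℝ]
        abel
      rw [e1, e2, e3]
      generalize (∑ i : Fin N, B i * R i) = S
      generalize (∑ i : Fin N, (R i)ᵀ * A i) = T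
      generalize (∑ i : Fin N, (B i * R i) * ((R i)ᵀ * A i)) = P
      simp only [hcdef, Matrix.smul_mul, Matrix.mul_smul, Matrix.sub_mul, Matrix.mul_sub,
        smul_sub, smul_add, smul_smul]
      match_scalars <;> field_simp <;> ring
    rw [hid]
    set β : ℝ := ∑ i, ‖B i * R i - Bref‖ with hβdef
    set α : ℝ := ∑ i, ‖(R i)ᵀ * A i - Aref‖ with hαdef
    set β2 : ℝ := ∑ i, ‖B i * R i - Bref‖ ^ 2 with hβ2def
    set α2 : ℝ := ∑ i, ‖(R i)ᵀ * A i - Aref‖ ^ 2 with hα2def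
    have hβ0 : 0 ≤ β := Finset.sum_nonneg fun i _ => norm_nonneg _
    have hα0 : 0 ≤ α := Finset.sum_nonneg fun i _ => norm_nonneg _
    have hSb : ‖∑ i, (B i * R i - Bref)‖ ≤ β := norm_sum_le _ _
    have hSa : ‖∑ i, ((R i)ᵀ * A i - Aref)‖ ≤ α := norm_sum_le _ _
    have hW : ‖∑ i, (B i * R i - Bref) * ((R i)ᵀ * A i - Aref)‖ ≤ (β2 + α2) / 2 := by
      refine (norm_sum_le _ _).trans ?_
      rw [hβ2def, hα2def, ← Finset.sum_add_distrib, Finset.sum_div]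
      refine Finset.sum_le_sum fun i _ => ?_
      exact (Matrix.frobenius_norm_mul _ _).trans (half_am _ _)
    have hcauchyb : β ^ 2 ≤ (N:ℝ) * β2 := by
      have := sq_sum_le_card_mul_sum_sq (s := (Finset.univ : Finset (Fin N)))
        (f := fun i => ‖B i * R i - Bref‖)
      simpa [Finset.card_univ] using this
    have hcauchya : α ^ 2 ≤ (N:ℝ) * α2 := by
      have := sq_sum_le_card_mul_sum_sq (s := (Finset.univ : Finset (Fin N)))
        (f := fun i => ‖(R i)ᵀ * A i - Aref‖)
      simpa [Finset.card_univ] using this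
    have hb2 : (c * β) ^ 2 ≤ c * β2 := by
      calc (c * β) ^ 2 = c * c * β ^ 2 := by ring
        _ ≤ c * c * ((N:ℝ) * β2) := by
            have : (0:ℝ) ≤ c * c := by positivity
            exact mul_le_mul_of_nonneg_left hcauchyb this
        _ = c * (c * (N:ℝ)) * β2 := by ring
        _ = c * β2 := by rw [hcN]; ring
    have ha2 : (c * α) ^ 2 ≤ c * α2 := by
      calc (c * α) ^ 2 = c * c * α ^ 2 := by ring
        _ ≤ c * c * ((N:ℝ) * α2) := by
            have : (0:ℝ) ≤ c * c := by positivity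
            exact mul_le_mul_of_nonneg_left hcauchya this
        _ = c * (c * (N:ℝ)) * α2 := by ring
        _ = c * α2 := by rw [hcN]; ring
    have step1 : ‖(c • ∑ i, (B i * R i - Bref)) * (c • ∑ i, ((R i)ᵀ * A i - Aref))
        - c • ∑ i, (B i * R i - Bref) * ((R i)ᵀ * A i - Aref)‖
        ≤ (c * β) * (c * α) + c * ((β2 + α2) / 2) := by
      refine (norm_sub_le _ _).trans (add_le_add ?_ ?_)
      · refine (Matrix.frobenius_norm_mul _ _).trans ?_
        simp only [norm_smul, Real.norm_eq_abs, abs_of_pos hc0]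
        exact mul_le_mul (mul_le_mul_of_nonneg_left hSb hc0.le)
          (mul_le_mul_of_nonneg_left hSa hc0.le)
          (by positivity) (by positivity)
      · simp only [norm_smul, Real.norm_eq_abs, abs_of_pos hc0]
        exact mul_le_mul_of_nonneg_left hW hc0.le
    have hsum : c * ∑ i, (‖B i * R i - Bref‖ ^ 2 + ‖(R i)ᵀ * A i - Aref‖ ^ 2)
        = c * (β2 + α2) := by rw [Finset.sum_add_distrib]
    rw [hsum]
    calc _ ≤ (c * β) * (c * α) + c * ((β2 + α2) / 2) := step1
      _ ≤ ((c * β) ^ 2 + (c * α) ^ 2) / 2 + c * ((β2 + α2) / 2) :=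
          add_le_add_left (half_am _ _) _
      _ ≤ (c * β2 + c * α2) / 2 + c * ((β2 + α2) / 2) :=
          add_le_add_left ((div_le_div_iff_of_pos_right (by norm_num : (0:ℝ) < 2)).mpr
            (add_le_add hb2 ha2)) _
      _ = c * (β2 + α2) := by ring
  · -- second inequality
    have hgain' : ∑ i, ‖(R i)ᵀ * A i - Aref‖ ^ 2
        ≤ (1 - c₀ * lam) * ∑ i, ‖A i - Aref‖ ^ 2 := by
      have h := hgain
      rw [show (1 - c₀ * lam) * (c * ∑ i, ‖A i - Aref‖ ^ 2)
          = c * ((1 - c₀ * lam) * ∑ i, ‖A i - Aref‖ ^ 2) by ring] at h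
      exact le_of_mul_le_mul_left h hc0
    set k : ℝ := 4 * Real.sqrt τ * κ * η * GB / δA * lam + 4 * κ ^ 2 * lam ^ 2 * τ with hk
    have hper : ∀ i, ‖B i * R i - Bref‖ ^ 2
        ≤ ‖B i - Bref‖ ^ 2 + k * ‖A i - Aref‖ ^ 2 := by
      intro i
      set u : ℝ := ‖B i - Bref‖ with hu
      set D : ℝ := ‖A i - Aref‖ with hD
      set s : ℝ := Real.sqrt τ with hs
      have hs0 : 0 ≤ s := Real.sqrt_nonneg τ
      have hD0 : 0 ≤ D := norm_nonneg _
      have hu0 : 0 ≤ u := norm_nonneg _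
      have hsplit : B i * R i - Bref = (B i - Bref) + B i * (R i - 1) := by
        rw [Matrix.mul_sub, Matrix.mul_one]
        abel
      have h0 : ‖B i * R i - Bref‖ ≤ u + 2 * s * κ * lam * D := by
        rw [hsplit]
        refine (norm_add_le _ _).trans (add_le_add le_rfl ?_)
        refine (Matrix.frobenius_norm_mul _ _).trans ?_
        calc ‖B i‖ * ‖R i - 1‖ ≤ s * (2 * κ * lam * D) :=
              mul_le_mul (hB i) (hRI i) (norm_nonneg _) hs0
          _ = 2 * s * κ * lam * D := by ring
      have h0' : ‖B i * R i - Bref‖ ^ 2 ≤ (u + 2 * s * κ * lam * D) ^ 2 :=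
        pow_le_pow_left₀ (norm_nonneg _) h0 2
      have hDD : D ≤ D * D / δA := by
        rw [le_div_iff₀ hδA]
        exact mul_le_mul_of_nonneg_left (hA i) hD0
      have hcross : u * D ≤ η * GB * (D * D / δA) := by
        calc u * D ≤ (η * GB) * D := mul_le_mul_of_nonneg_right (hBref i) hD0
          _ ≤ (η * GB) * (D * D / δA) := by
              exact mul_le_mul_of_nonneg_left hDD (by positivity)
      calc ‖B i * R i - Bref‖ ^ 2 ≤ (u + 2 * s * κ * lam * D) ^ 2 := h0'
        _ = u ^ 2 + (4 * s * κ * lam) * (u * D) + 4 * κ ^ 2 * lam ^ 2 * s ^ 2 * D ^ 2 := by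
            ring
        _ ≤ u ^ 2 + (4 * s * κ * lam) * (η * GB * (D * D / δA))
              + 4 * κ ^ 2 * lam ^ 2 * s ^ 2 * D ^ 2 := by
            have h4 : (0:ℝ) ≤ 4 * s * κ * lam := by positivity
            exact add_le_add (add_le_add_right (mul_le_mul_of_nonneg_left hcross h4) _) le_rfl
        _ = u ^ 2 + k * D ^ 2 := by
            rw [hk, hs, Real.sq_sqrt hτ]
            ring
    refine mul_le_mul_of_nonneg_left ?_ hc0.le
    have hsumB : ∑ i, ‖B i * R i - Bref‖ ^ 2
        ≤ ∑ i, ‖B i - Bref‖ ^ 2 + k * ∑ i, ‖A i - Aref‖ ^ 2 := by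
      calc ∑ i, ‖B i * R i - Bref‖ ^ 2
          ≤ ∑ i, (‖B i - Bref‖ ^ 2 + k * ‖A i - Aref‖ ^ 2) :=
            Finset.sum_le_sum fun i _ => hper i
        _ = ∑ i, ‖B i - Bref‖ ^ 2 + k * ∑ i, ‖A i - Aref‖ ^ 2 := by
            rw [Finset.sum_add_distrib, Finset.mul_sum]
    have hRHS : ∑ i, (‖B i - Bref‖ ^ 2 + ‖A i - Aref‖ ^ 2
          - ((c₀ - 4 * Real.sqrt τ * κ * η * GB / δA) * lam - 4 * κ ^ 2 * lam ^ 2 * τ)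
            * ‖A i - Aref‖ ^ 2)
        = ∑ i, ‖B i - Bref‖ ^ 2 + ∑ i, ‖A i - Aref‖ ^ 2
          - ((c₀ - 4 * Real.sqrt τ * κ * η * GB / δA) * lam - 4 * κ ^ 2 * lam ^ 2 * τ)
            * ∑ i, ‖A i - Aref‖ ^ 2 := by
      rw [Finset.sum_sub_distrib, Finset.sum_add_distrib, Finset.mul_sum]
    rw [Finset.sum_add_distrib, hRHS]
    have hΓ : ((c₀ - 4 * Real.sqrt τ * κ * η * GB / δA) * lam - 4 * κ ^ 2 * lam ^ 2 * τ)
        = c₀ * lam - k := by rw [hk]; ring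
    rw [hΓ]
    calc ∑ i, ‖B i * R i - Bref‖ ^ 2 + ∑ i, ‖(R i)ᵀ * A i - Aref‖ ^ 2
        ≤ (∑ i, ‖B i - Bref‖ ^ 2 + k * ∑ i, ‖A i - Aref‖ ^ 2)
          + (1 - c₀ * lam) * ∑ i, ‖A i - Aref‖ ^ 2 := add_le_add hsumB hgain'
      _ = ∑ i, ‖B i - Bref‖ ^ 2 + ∑ i, ‖A i - Aref‖ ^ 2
          - (c₀ * lam - k) * ∑ i, ‖A i - Aref‖ ^ 2 := by ring
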